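/- arXiv:2105.08000 — 3 statements merged into one kernel-verified Lean document; each statement's English description precedes it below -/
import Mathlib

section
/- Let G be a finitely generated torsion-free nilpotent group and g : ℕ → G a polynomial sequence. If there exists an element c ∈ G with g(n) = c for infinitely many n ∈ ℕ, then g is constant. Conversely, a constant sequence obviously repeats its value infinitely many times. -/
namespace PaperPoly

/-- `DegLE d f` means that `f : S → G` is a polynomial map of degree at most `d ∈ ℕ`:
the base case `DegLE 0 f` means `f` is constant, and `DegLE (d+1) f` means that for every
`s : S` both difference maps `L_s f : t ↦ f (s+t) * (f t)⁻¹` and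
`R_s f : t ↦ (f t)⁻¹ * f (s+t)` satisfy `DegLE d`. -/
def DegLE {S : Type*} [AddCommSemigroup S] {G : Type*} [Group G] : ℕ → (S → G) → Prop
  | 0 => fun f => ∀ t t' : S, f t = f t'
  | d + 1 => fun f => ∀ s : S,
      DegLE d (fun t => f (s + t) * (f t)⁻¹) ∧ DegLE d (fun t => (f t)⁻¹ * f (s + t))

/-- `f` is a polynomial map (of some finite degree). -/
def IsPoly {S : Type*} [AddCommSemigroup S] {G : Type*} [Group G] (f : S → G) : Prop :=
  ∃ d : ℕ, DegLE d f

open Polynomial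
lemma descPoch_comb_zero : ∀ (d : ℕ) (r : ℕ → ℚ),
    (∑ k ∈ Finset.range (d + 1), C (r k) * descPochhammer ℚ k) = 0 → ∀ k ≤ d, r k = 0 := by
  intro d
  induction d with
  | zero =>
    intro r h k hk
    interval_cases k
    simpa [descPochhammer_zero] using h
  | succ d ih =>
    intro r h
    have htop : r (d + 1) = 0 := by
      have hc := congrArg (fun p => Polynomial.coeff p (d + 1)) h
      simp only [Polynomial.finset_sum_coeff, Polynomial.coeff_zero] at hc
      rw [Finset.sum_range_succ] at hc
      have h1 : ∀ k ∈ Finset.range (d + 1), (C (r k) * descPochhammer ℚ k).coeff (d + 1) = 0 := by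
        intro k hk
        rw [Polynomial.coeff_C_mul]
        rw [Polynomial.coeff_eq_zero_of_natDegree_lt, mul_zero]
        rw [descPochhammer_natDegree]
        exact Finset.mem_range.mp hk
      rw [Finset.sum_eq_zero h1, zero_add, Polynomial.coeff_C_mul] at hc
      have h2 : (descPochhammer ℚ (d + 1)).coeff (d + 1) = 1 := by
        have := (monic_descPochhammer ℚ (d + 1)).coeff_natDegree
        rwa [descPochhammer_natDegree] at this
      rw [h2, mul_one] at hc
      exact hc
    have hrest : (∑ k ∈ Finset.range (d + 1), C (r k) * descPochhammer ℚ k) = 0 := by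
      rw [Finset.sum_range_succ, htop] at h
      simpa using h
    intro k hk
    rcases Nat.lt_or_ge k (d + 1) with h' | h'
    · exact ih r hrest k (Nat.lt_succ_iff.mp h')
    · have : k = d + 1 := le_antisymm hk h'
      rw [this]; exact htop

lemma poly_vanish (d : ℕ) (c : ℕ → ℚ) (S : Set ℕ) (hS : S.Infinite)
    (h : ∀ n ∈ S, (∑ k ∈ Finset.range (d + 1), c k * (n.choose k : ℚ)) = 0) :
    ∀ k ≤ d, c k = 0 := by
  set P : Polynomial ℚ :=
    ∑ k ∈ Finset.range (d + 1), C (c k / (k.factorial : ℚ)) * descPochhammer ℚ k with hP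
  have heval : ∀ n : ℕ, P.eval (n : ℚ) = ∑ k ∈ Finset.range (d + 1), c k * (n.choose k : ℚ) := by
    intro n
    rw [hP, Polynomial.eval_finset_sum]
    refine Finset.sum_congr rfl (fun k _ => ?_)
    rw [Polynomial.eval_mul, Polynomial.eval_C, descPochhammer_eval_eq_descFactorial,
      Nat.descFactorial_eq_factorial_mul_choose]
    have hfac : ((k.factorial : ℚ)) ≠ 0 := Nat.cast_ne_zero.mpr k.factorial_ne_zero
    push_cast
    field_simp
  have hzero : P = 0 := by
    apply Polynomial.eq_zero_of_infinite_isRoot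
    have himg : ((fun n : ℕ => (n : ℚ)) '' S).Infinite :=
      hS.image (Set.injOn_of_injective Nat.cast_injective)
    refine himg.mono ?_
    rintro x ⟨n, hn, rfl⟩
    exact (heval n).trans (h n hn)
  intro k hk
  have := descPoch_comb_zero d (fun k => c k / (k.factorial : ℚ)) hzero k hk
  have hfac : ((k.factorial : ℚ)) ≠ 0 := Nat.cast_ne_zero.mpr k.factorial_ne_zero
  field_simp at this
  simpa using this


section Plumbing

variable {S : Type*} [AddCommSemigroup S] {G : Type*} [Group G] {H : Type*} [Group H]

lemma degLE_congr {d : ℕ} {f g : S → G} (h : ∀ t, f t = g t) (hf : DegLE d f) : DegLE d g := by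
  have : f = g := funext h
  subst this; exact hf

lemma degLE_comp {d : ℕ} (φ : G →* H) {f : S → G} (hf : DegLE d f) :
    DegLE d fun t => φ (f t) := by
  induction d generalizing f with
  | zero => exact fun t t' => congrArg φ (hf t t')
  | succ d ih =>
    intro s
    exact ⟨degLE_congr (fun t => by simp) (ih (hf s).1),
           degLE_congr (fun t => by simp) (ih (hf s).2)⟩

lemma degLE_reflect {d : ℕ} (φ : G →* H) (hφ : Function.Injective φ) {f : S → G}
    (hf : DegLE d fun t => φ (f t)) : DegLE d f := by
  induction d generalizing f with
  | zero => exact fun t t' => hφ (hf t t')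
  | succ d ih =>
    intro s
    exact ⟨ih (degLE_congr (fun t => by simp) (hf s).1),
           ih (degLE_congr (fun t => by simp) (hf s).2)⟩

lemma degLE_conj {d : ℕ} (c : G) {f : S → G} (hf : DegLE d f) :
    DegLE d fun t => c * f t * c⁻¹ := by
  have := degLE_comp (MulAut.conj c).toMonoidHom hf
  exact degLE_congr (fun t => by simp [MulAut.conj_apply]) this

lemma degLE_mul_const {d : ℕ} {f : S → G} (hf : DegLE d f) (c : G) :
    DegLE d fun t => f t * c := by
  induction d generalizing f with
  | zero => exact fun t t' => by show f t * c = f t' * c; rw [hf t t']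
  | succ d _ =>
    intro s
    constructor
    · exact degLE_congr (fun t => by group) (hf s).1
    · exact degLE_congr (fun t => by group) (degLE_conj c⁻¹ (hf s).2)

end Plumbing


section Abelian
variable {A : Type*} [CommGroup A]

/-- difference operator -/
def D (f : ℕ → A) : ℕ → A := fun n => f (n + 1) * (f n)⁻¹

lemma degLE_D {d : ℕ} {f : ℕ → A} (hf : DegLE (d + 1) f) : DegLE d (D f) :=
  degLE_congr (fun t => by simp [D, Nat.add_comm]) (hf 1).1

lemma sum_range_choose_eq (n k : ℕ) :
    ∑ m ∈ Finset.range n, m.choose k = n.choose (k + 1) := by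
  induction n with
  | zero => simp
  | succ n ih => rw [Finset.sum_range_succ, ih, Nat.choose_succ_succ, Nat.add_comm]

lemma prod_D (f : ℕ → A) (n : ℕ) : f n = f 0 * ∏ m ∈ Finset.range n, D f m := by
  induction n with
  | zero => simp
  | succ n ih =>
    rw [Finset.prod_range_succ, ← mul_assoc, ← ih]
    show f (n + 1) = f n * (f (n + 1) * (f n)⁻¹)
    rw [mul_comm (f (n+1)) (f n)⁻¹, mul_inv_cancel_left]

lemma formula : ∀ (d : ℕ) (f : ℕ → A), DegLE d f → ∀ n,
    f n = ∏ k ∈ Finset.range (d + 1), (D^[k] f 0) ^ (n.choose k) := by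
  intro d
  induction d with
  | zero =>
    intro f hf n
    simpa using hf n 0
  | succ d ih =>
    intro f hf n
    have hg := degLE_D hf
    have key : ∏ m ∈ Finset.range n, D f m
        = ∏ k ∈ Finset.range (d + 1), (D^[k] (D f) 0) ^ (n.choose (k + 1)) := by
      calc ∏ m ∈ Finset.range n, D f m
          = ∏ m ∈ Finset.range n, ∏ k ∈ Finset.range (d + 1), (D^[k] (D f) 0) ^ (m.choose k) :=
            Finset.prod_congr rfl (fun m _ => ih (D f) hg m)
        _ = ∏ k ∈ Finset.range (d + 1), ∏ m ∈ Finset.range n, (D^[k] (D f) 0) ^ (m.choose k) :=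
            Finset.prod_comm
        _ = ∏ k ∈ Finset.range (d + 1), (D^[k] (D f) 0) ^ (∑ m ∈ Finset.range n, m.choose k) :=
            Finset.prod_congr rfl (fun k _ => (Finset.prod_pow_eq_pow_sum _ _ _))
        _ = _ := Finset.prod_congr rfl (fun k _ => by rw [sum_range_choose_eq])
    rw [Finset.prod_range_succ']
    simp only [Function.iterate_succ_apply, Function.iterate_zero_apply, Nat.choose_zero_right,
      pow_one]
    rw [← key, mul_comm, ← prod_D]

end Abelian

abbrev Monoid.IsTorsionFree (G : Type*) [Monoid G] : Prop :=
  ∀ g : G, g ≠ 1 → ¬IsOfFinOrder g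

lemma abelian_case {A : Type*} [CommGroup A] (htf : Monoid.IsTorsionFree A) (d : ℕ)
    (f : ℕ → A) (hf : DegLE d f) (hinf : {n | f n = 1}.Infinite) : ∀ n, f n = 1 := by
  classical
  set a : ℕ → A := fun k => D^[k] f 0 with ha
  have hform : ∀ n, f n = ∏ k ∈ Finset.range (d + 1), a k ^ (n.choose k) := formula d f hf
  -- additive module setup
  set v : Fin (d + 1) → Additive A := fun k => Additive.ofMul (a k.val) with hv
  set M : Submodule ℤ (Additive A) := Submodule.span ℤ (Set.range v) with hM
  haveI : Module.Finite ℤ M := Module.Finite.span_of_finite ℤ (Set.finite_range v)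
  haveI : NoZeroSMulDivisors ℤ M := by
    constructor
    intro z x hzx
    by_cases hz : z = 0
    · exact Or.inl hz
    · right
      apply Subtype.ext
      have hcoe : z • (x : Additive A) = 0 := by
        have := congrArg (Submodule.subtype M) hzx
        simpa using this
      set y : A := Additive.toMul (x : Additive A) with hy
      have hyz : y ^ z = 1 := by
        have := congrArg Additive.toMul hcoe
        rwa [toMul_zsmul] at this
      have hynat : y ^ z.natAbs = 1 := by
        rcases Int.natAbs_eq z with h' | h'
        · rw [← zpow_natCast, ← h', hyz]
        · rw [← zpow_natCast, ← neg_neg (z.natAbs : ℤ), ← h', zpow_neg, hyz, inv_one]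
      have : y = 1 := by
        by_contra hy1
        exact htf y hy1 (isOfFinOrder_iff_pow_eq_one.mpr
          ⟨z.natAbs, Int.natAbs_pos.mpr hz, hynat⟩)
      have h1 : Additive.toMul (x : Additive A) = 1 := by rw [← hy]; exact this
      simpa using congrArg Additive.ofMul h1
  obtain ⟨r, b⟩ := Module.basisOfFiniteTypeTorsionFree' (R := ℤ) (M := M)
  set w : Fin (d + 1) → M := fun k => ⟨v k, Submodule.subset_span (Set.mem_range_self k)⟩ with hw
  -- the relation in M for n in the zero set
  have hrel : ∀ n ∈ {n | f n = 1}, (∑ k : Fin (d + 1), ((n.choose k.val : ℤ) • w k)) = 0 := by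
    intro n hn
    apply Subtype.ext
    push_cast [Submodule.coe_sum]
    show (∑ k : Fin (d + 1), (n.choose k.val : ℤ) • v k) = 0
    apply Additive.toMul.injective
    rw [toMul_sum]
    simp only [toMul_zsmul, hv, toMul_ofMul, zpow_natCast, toMul_zero]
    rw [Fin.prod_univ_eq_prod_range (fun k => a k ^ (n.choose k))]
    exact (hform n).symm.trans hn
  -- coordinates vanish
  have hcoord : ∀ (j : Fin r) (k : Fin (d + 1)), b.coord j (w k) = 0 := by
    intro j k
    set c : ℕ → ℚ := fun k => if h : k < d + 1 then ((b.coord j (w ⟨k, h⟩) : ℤ) : ℚ) else 0 with hc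
    have hvan : ∀ k ≤ d, c k = 0 := by
      apply poly_vanish d c {n | f n = 1} hinf
      intro n hn
      have h0 := congrArg (b.coord j) (hrel n hn)
      rw [map_sum, map_zero] at h0
      have : (∑ k : Fin (d + 1), (n.choose k.val : ℤ) * b.coord j (w k)) = 0 := by
        simpa [smul_eq_mul] using h0
      have hq : ((∑ k : Fin (d + 1), (n.choose k.val : ℤ) * b.coord j (w k) : ℤ) : ℚ) = 0 := by
        rw [this]; exact Int.cast_zero
      push_cast at hq
      rw [← hq, ← Fin.sum_univ_eq_sum_range (fun k => c k * (n.choose k : ℚ)) (d + 1)]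
      refine Finset.sum_congr rfl (fun k _ => ?_)
      rw [hc]
      simp only [k.isLt, dif_pos]
      rw [mul_comm]
    have := hvan k.val (Nat.lt_succ_iff.mp k.isLt)
    rw [hc] at this
    simp only [k.isLt, dif_pos] at this
    exact_mod_cast this
  have hw0 : ∀ k : Fin (d + 1), a k.val = 1 := by
    intro k
    have : w k = 0 := by
      apply b.ext_elem
      intro j
      rw [map_zero]
      have := hcoord j k
      rwa [Module.Basis.coord_apply] at this
    have hv0 : v k = 0 := by
      have := congrArg (Submodule.subtype M) this
      exact this
    rw [hv] at hv0
    exact ofMul_eq_zero.mp hv0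
  intro n
  rw [hform n]
  apply Finset.prod_eq_one
  intro k hk
  rw [show a k = 1 from hw0 ⟨k, Finset.mem_range.mp hk⟩, one_pow]


lemma conj_pow_of_commute {H : Type*} [Group H] (a b : H)
    (h : Commute (a * b * a⁻¹ * b⁻¹) a) :
    ∀ m : ℕ, a ^ m * b * (a ^ m)⁻¹ = (a * b * a⁻¹ * b⁻¹) ^ m * b := by
  intro m
  induction m with
  | zero => simp
  | succ m ih =>
    have h2 : a * (a * b * a⁻¹ * b⁻¹) ^ m = (a * b * a⁻¹ * b⁻¹) ^ m * a :=
      ((h.pow_left m).symm).eq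
    calc a ^ (m + 1) * b * (a ^ (m + 1))⁻¹
        = a * (a ^ m * b * (a ^ m)⁻¹) * a⁻¹ := by
          rw [pow_succ']; group
      _ = a * ((a * b * a⁻¹ * b⁻¹) ^ m * b) * a⁻¹ := by rw [ih]
      _ = (a * b * a⁻¹ * b⁻¹) ^ m * (a * b * a⁻¹) := by
          rw [← mul_assoc, h2]; group
      _ = (a * b * a⁻¹ * b⁻¹) ^ (m + 1) * b := by rw [pow_succ]; group

lemma malcev_step {G : Type*} [Group G] (htf : Monoid.IsTorsionFree G) :
    ∀ (k : ℕ) (x : G) (n : ℕ), 0 < n → x ∈ Subgroup.upperCentralSeries G (k + 1) →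
      x ^ n ∈ Subgroup.upperCentralSeries G k → x ∈ Subgroup.upperCentralSeries G k := by
  intro k
  induction k with
  | zero =>
    intro x n hn _ hxn
    rw [upperCentralSeries_zero, Subgroup.mem_bot] at hxn ⊢
    by_contra hx1
    exact htf x hx1 (isOfFinOrder_iff_pow_eq_one.mpr ⟨n, hn, hxn⟩)
  | succ k ih =>
    intro x n hn hx hxn
    rw [mem_upperCentralSeries_succ_iff]
    intro y
    set c := x * y * x⁻¹ * y⁻¹ with hc
    have hc1 : c ∈ Subgroup.upperCentralSeries G (k + 1) :=
      mem_upperCentralSeries_succ_iff.mp hx y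
    apply ih c n hn hc1
    -- work in the quotient by Subgroup.upperCentralSeries G k
    set N := Subgroup.upperCentralSeries G k with hN
    haveI : N.Normal := inferInstance
    set π := QuotientGroup.mk' N with hπ
    rw [← QuotientGroup.eq_one_iff (c ^ n) (N := N)]
    have hpc : π c = π x * π y * (π x)⁻¹ * (π y)⁻¹ := by
      rw [hc]; simp [map_mul, map_inv]
    have hcomm : Commute (π x * π y * (π x)⁻¹ * (π y)⁻¹) (π x) := by
      rw [← hpc, ← commutatorElement_eq_one_iff_commute, commutatorElement_def]
      have hmem : c * x * c⁻¹ * x⁻¹ ∈ N := mem_upperCentralSeries_succ_iff.mp hc1 x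
      have h := (QuotientGroup.eq_one_iff (c * x * c⁻¹ * x⁻¹) (N := N)).mpr hmem
      simpa [hπ, map_mul, map_inv] using h
    have hxny : x ^ n * y * (x ^ n)⁻¹ * y⁻¹ ∈ N := mem_upperCentralSeries_succ_iff.mp hxn y
    have h1 : (π x) ^ n * π y * ((π x) ^ n)⁻¹ * (π y)⁻¹ = 1 := by
      have := (QuotientGroup.eq_one_iff (x ^ n * y * (x ^ n)⁻¹ * y⁻¹) (N := N)).mpr hxny
      simpa [hπ, map_mul, map_inv, map_pow] using this
    have h2 := conj_pow_of_commute (π x) (π y) hcomm n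
    have hA : (π x) ^ n * π y * ((π x) ^ n)⁻¹ = π y := mul_inv_eq_one.mp h1
    have hCn : (π x * π y * (π x)⁻¹ * (π y)⁻¹) ^ n = 1 :=
      mul_eq_right.mp (h2.symm.trans hA)
    show π (c ^ n) = 1
    rw [map_pow, hpc]
    exact hCn

lemma quotient_center_torsionFree {G : Type*} [Group G] (htf : Monoid.IsTorsionFree G)
    (hN : ∃ N, Subgroup.upperCentralSeries G N = ⊤) :
    Monoid.IsTorsionFree (G ⧸ Subgroup.center G) := by
  intro q hq hfin
  obtain ⟨n, hn, hqn⟩ := isOfFinOrder_iff_pow_eq_one.mp hfin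
  obtain ⟨x, rfl⟩ := QuotientGroup.mk_surjective q
  have hxn : x ^ n ∈ Subgroup.center G := by
    rw [← QuotientGroup.eq_one_iff]
    exact hqn
  obtain ⟨N, hNt⟩ := hN
  have hx : x ∈ Subgroup.upperCentralSeries G N := hNt ▸ Subgroup.mem_top x
  have hdesc : ∀ m, x ∈ Subgroup.upperCentralSeries G (m + 1) → x ∈ Subgroup.upperCentralSeries G 1 := by
    intro m
    induction m with
    | zero => exact id
    | succ m ihm =>
      intro hxm
      apply ihm
      apply malcev_step htf (m + 1) x n hn hxm
      apply upperCentralSeries_mono G (Nat.one_le_iff_ne_zero.mpr (Nat.succ_ne_zero m))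
      rw [upperCentralSeries_one]
      exact hxn
  have hx1 : x ∈ Subgroup.center G := by
    rw [← upperCentralSeries_one]
    cases N with
    | zero =>
      rw [upperCentralSeries_zero] at hNt
      have : x ∈ (⊥ : Subgroup G) := hNt ▸ Subgroup.mem_top x
      rw [Subgroup.mem_bot] at this
      rw [this]
      exact Subgroup.one_mem _
    | succ m => exact hdesc m hx
  exact hq ((QuotientGroup.eq_one_iff x).mpr hx1)


universe u

lemma key : ∀ (c : ℕ) (G : Type u) [Group G], Monoid.IsTorsionFree G →
    Subgroup.upperCentralSeries G c = ⊤ → ∀ g : ℕ → G, IsPoly g →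
    {n | g n = 1}.Infinite → ∀ n, g n = 1 := by
  intro c
  induction c with
  | zero =>
    intro G _ htf htop g hg hinf n
    have hx : g n ∈ Subgroup.upperCentralSeries G 0 := htop ▸ Subgroup.mem_top (g n)
    rwa [upperCentralSeries_zero, Subgroup.mem_bot] at hx
  | succ c ih =>
    intro G _ htf htop g hg hinf
    set Z := Subgroup.center G with hZ
    set π := QuotientGroup.mk' Z with hπ
    have hQtop : Subgroup.upperCentralSeries (G ⧸ Z) c = ⊤ := by
      apply Subgroup.comap_injective (QuotientGroup.mk'_surjective Z)
      rw [comap_upperCentralSeries_quotient_center, Subgroup.comap_top]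
      exact htop
    have hQtf : Monoid.IsTorsionFree (G ⧸ Z) :=
      quotient_center_torsionFree htf ⟨c + 1, htop⟩
    obtain ⟨d, hd⟩ := hg
    have hπg : ∀ n, π (g n) = 1 := by
      apply ih (G ⧸ Z) hQtf hQtop (fun n => π (g n)) ⟨d, degLE_comp π hd⟩
      apply hinf.mono
      intro n hn
      simp only [Set.mem_setOf_eq] at hn ⊢
      rw [hn, map_one]
    have hmem : ∀ n, g n ∈ Z := fun n => (QuotientGroup.eq_one_iff (g n)).mp (hπg n)
    set f : ℕ → Z := fun n => ⟨g n, hmem n⟩ with hf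
    have hdf : DegLE d f := by
      apply degLE_reflect Z.subtype (Subgroup.subtype_injective Z)
      exact hd
    have htfZ : Monoid.IsTorsionFree Z := by
      intro z hz hford
      apply htf (z : G)
      · simpa using hz
      · exact Z.subtype.isOfFinOrder hford
    have hinfZ : {n | f n = 1}.Infinite := by
      apply hinf.mono
      intro n hn
      simp only [Set.mem_setOf_eq] at hn ⊢
      exact Subtype.ext hn
    intro n
    open scoped IsMulCommutative in have := abelian_case htfZ d f hdf hinfZ n
    have := congrArg (Z.subtype) this
    exact this


/-- In a finitely generated torsion-free nilpotent group `G`, a polynomial sequence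
`g : ℕ → G` repeats some value infinitely many times if and only if it is constant. -/
theorem polynomial_sequence_repeats_iff_constant {G : Type*} [Group G] [Group.FG G]
    [Group.IsNilpotent G] (htf : ∀ g : G, g ≠ 1 → ¬IsOfFinOrder g)
    (g : ℕ → G) (hg : IsPoly g) :
    (∃ c : G, {n : ℕ | g n = c}.Infinite) ↔ (∃ c : G, ∀ n : ℕ, g n = c) := by
  constructor
  · rintro ⟨c, hinf⟩
    obtain ⟨N, hN⟩ := Group.IsNilpotent.nilpotent G
    obtain ⟨d, hd⟩ := hg
    have h1 : DegLE d (fun n => g n * c⁻¹) := degLE_mul_const hd c⁻¹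
    have hinf1 : {n | g n * c⁻¹ = 1}.Infinite := by
      apply hinf.mono
      intro n hn
      simp only [Set.mem_setOf_eq] at hn ⊢
      rw [hn, mul_inv_cancel]
    have hall := key N G htf hN (fun n => g n * c⁻¹) ⟨d, h1⟩ hinf1
    exact ⟨c, fun n => by have := hall n; rwa [mul_inv_eq_one] at this⟩
  · rintro ⟨c, hc⟩
    refine ⟨c, ?_⟩
    have : {n : ℕ | g n = c} = Set.univ := Set.eq_univ_of_forall (fun n => hc n)
    rw [this]
    exact Set.infinite_univ


end PaperPoly
end

section
/- Let G be a finitely generated nilpotent group and H a subgroup of infinite index in G. Then there exists a normal subgroup N of G containing H such that N has infinite index in G. -/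
open Subgroup
open scoped commutatorElement

section Aux

variable {X : Type*} [Group X]

private lemma conj_central {c : X} (hc : c ∈ Subgroup.center X) (a : X) :
    a * c * a⁻¹ = c := by
  rw [Subgroup.mem_center_iff.mp hc a, mul_assoc, mul_inv_cancel, mul_one]

private lemma comm_mul_left (a b y : X) : ⁅a * b, y⁆ = a * ⁅b, y⁆ * a⁻¹ * ⁅a, y⁆ := by
  simp only [commutatorElement_def]; group

private lemma comm_mul_right (x a b : X) : ⁅x, a * b⁆ = ⁅x, a⁆ * (a * ⁅x, b⁆ * a⁻¹) := by
  simp only [commutatorElement_def]; group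

private lemma comm_pow_left {a b : X} (h : ⁅a, b⁆ ∈ Subgroup.center X) :
    ∀ k : ℕ, ⁅a ^ k, b⁆ = ⁅a, b⁆ ^ k
  | 0 => by simp
  | (k + 1) => by
    rw [pow_succ', comm_mul_left, comm_pow_left h k,
      conj_central (pow_mem h k) a, ← pow_succ]

private lemma comm_pow_right {a b : X} (h : ⁅a, b⁆ ∈ Subgroup.center X) :
    ∀ k : ℕ, ⁅a, b ^ k⁆ = ⁅a, b⁆ ^ k
  | 0 => by simp
  | (k + 1) => by
    rw [pow_succ', comm_mul_right, comm_pow_right h k,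
      conj_central (pow_mem h k) b, ← pow_succ']

/-- central elements with a power in `H₁` form a subgroup. -/
private def auxT (H₁ : Subgroup X) : Subgroup X where
  carrier := {x | x ∈ Subgroup.center X ∧ ∃ n : ℕ, 0 < n ∧ x ^ n ∈ H₁}
  one_mem' := ⟨Subgroup.one_mem _, 1, Nat.one_pos, by simpa using H₁.one_mem⟩
  mul_mem' := by
    rintro x y ⟨hxc, n, hn, hxn⟩ ⟨hyc, m, hm, hym⟩
    refine ⟨Subgroup.mul_mem _ hxc hyc, n * m, Nat.mul_pos hn hm, ?_⟩
    have hxy : Commute x y := (Subgroup.mem_center_iff.mp hxc y).symm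
    rw [hxy.mul_pow]
    refine H₁.mul_mem ?_ ?_
    · rw [pow_mul]; exact pow_mem hxn m
    · rw [mul_comm n m, pow_mul]; exact pow_mem hym n
  inv_mem' := by
    rintro x ⟨hxc, n, hn, hxn⟩
    exact ⟨Subgroup.inv_mem _ hxc, n, hn, by rw [inv_pow]; exact H₁.inv_mem hxn⟩

end Aux

private lemma step_lemma {G : Type*} [Group G] [Group.FG G] (H : Subgroup G) (j : ℕ)
    (hj : (H ⊔ Subgroup.lowerCentralSeries (⊤ : Subgroup G) (j + 1)).index ≠ 0) :
    (H ⊔ Subgroup.lowerCentralSeries (⊤ : Subgroup G) (j + 2)).index ≠ 0 := by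
  set L1 := Subgroup.lowerCentralSeries (⊤ : Subgroup G) (j + 1) with hL1def
  set L2 := Subgroup.lowerCentralSeries (⊤ : Subgroup G) (j + 2) with hL2def
  have hL2succ : L2 = ⁅L1, (⊤ : Subgroup G)⁆ := Subgroup.lowerCentralSeries_succ ⊤ (j + 1)
  have hL1succ : L1 = ⁅Subgroup.lowerCentralSeries (⊤ : Subgroup G) j, (⊤ : Subgroup G)⁆ := Subgroup.lowerCentralSeries_succ ⊤ j
  have hL21 : L2 ≤ L1 := Subgroup.lowerCentralSeries_antitone ⊤ (Nat.le_succ (j + 1))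
  let π : G →* G ⧸ L2 := QuotientGroup.mk' L2
  have hπs : Function.Surjective π := QuotientGroup.mk'_surjective L2
  set H₁ : Subgroup (G ⧸ L2) := H.map π with hH₁def
  set K₁ : Subgroup (G ⧸ L2) := (H ⊔ L1).map π with hK₁def
  set Z₁ : Subgroup (G ⧸ L2) := L1.map π with hZ₁def
  -- the image of L1 is central in G ⧸ L2
  have hcentral : ∀ x ∈ Z₁, x ∈ Subgroup.center (G ⧸ L2) := by
    rintro x ⟨v, hv, rfl⟩
    rw [Subgroup.mem_center_iff]
    intro y
    obtain ⟨g, rfl⟩ := hπs y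
    rw [← map_mul, ← map_mul]
    show ((g * v : G) : G ⧸ L2) = ((v * g : G) : G ⧸ L2)
    rw [QuotientGroup.eq]
    have he : (g * v)⁻¹ * (v * g) = ⁅v⁻¹, g⁻¹⁆ := by
      rw [commutatorElement_def]; group
    rw [he, hL2succ]
    exact Subgroup.commutator_mem_commutator (L1.inv_mem hv) (Subgroup.mem_top _)
  haveI hZ₁n : Z₁.Normal := by
    constructor
    intro z hz g
    rw [conj_central (hcentral z hz) g]
    exact hz
  have hKsup : K₁ = H₁ ⊔ Z₁ := by
    rw [hK₁def, hH₁def, hZ₁def, Subgroup.map_sup]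
  have hH₁K₁ : H₁ ≤ K₁ := hKsup ▸ le_sup_left
  have hZ₁K₁ : Z₁ ≤ K₁ := hKsup ▸ le_sup_right
  have hdecomp : ∀ k ∈ K₁, ∃ h ∈ H₁, ∃ z ∈ Z₁, h * z = k := by
    intro k hk
    rw [hKsup, ← SetLike.mem_coe, Subgroup.mul_normal H₁ Z₁] at hk
    obtain ⟨h, hh, z, hz, rfl⟩ := hk
    exact ⟨h, hh, z, hz, rfl⟩
  -- every generator of Z₁ is central and has a power in H₁
  have hZT : Z₁ ≤ auxT H₁ := by
    have hZc : Z₁ = ⁅(Subgroup.lowerCentralSeries (⊤ : Subgroup G) j).map π, (⊤ : Subgroup (G ⧸ L2))⁆ := by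
      rw [hZ₁def, hL1succ, Subgroup.map_commutator, Subgroup.map_top_of_surjective π hπs]
    rw [hZc, Subgroup.commutator_le]
    rintro x ⟨v, hv, rfl⟩ y _
    obtain ⟨g, rfl⟩ := hπs y
    have hmemZ : ⁅π v, π g⁆ ∈ Z₁ := by
      refine ⟨⁅v, g⁆, ?_, map_commutatorElement π v g⟩
      rw [hL1succ]
      exact Subgroup.commutator_mem_commutator hv (Subgroup.mem_top _)
    have hc : ⁅π v, π g⁆ ∈ Subgroup.center (G ⧸ L2) := hcentral _ hmemZ
    refine ⟨hc, ?_⟩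
    obtain ⟨m, hm, -, hvm⟩ := Subgroup.exists_pow_mem_of_index_ne_zero hj v
    obtain ⟨n, hn, -, hgn⟩ := Subgroup.exists_pow_mem_of_index_ne_zero hj g
    rw [← SetLike.mem_coe, Subgroup.mul_normal H L1] at hvm hgn
    obtain ⟨h, hh, u, hu, hvm'⟩ := hvm
    obtain ⟨h₂, hh₂, u₂, hu₂, hgn'⟩ := hgn
    refine ⟨m * n, Nat.mul_pos hm hn, ?_⟩
    have hπh : π h ∈ H₁ := ⟨h, hh, rfl⟩
    have hπh₂ : π h₂ ∈ H₁ := ⟨h₂, hh₂, rfl⟩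
    have hπu : π u ∈ Subgroup.center (G ⧸ L2) := hcentral _ ⟨u, hu, rfl⟩
    have hπu₂ : π u₂ ∈ Subgroup.center (G ⧸ L2) := hcentral _ ⟨u₂, hu₂, rfl⟩
    have e1 : ⁅π v, π g⁆ ^ m = ⁅π h, π g⁆ := by
      rw [← comm_pow_left hc m, ← map_pow, ← hvm', map_mul, comm_mul_left]
      have h1 : ⁅π u, π g⁆ = 1 :=
        commutatorElement_eq_one_iff_commute.mpr
          ((Subgroup.mem_center_iff.mp hπu (π g)).symm)
      rw [h1]
      group
    have hc2 : ⁅π h, π g⁆ ∈ Subgroup.center (G ⧸ L2) := e1 ▸ pow_mem hc m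
    have e2 : ⁅π h, π g⁆ ^ n = ⁅π h, π h₂⁆ := by
      rw [← comm_pow_right hc2 n, ← map_pow, ← hgn', map_mul, comm_mul_right]
      have h2 : ⁅π h, π u₂⁆ = 1 :=
        commutatorElement_eq_one_iff_commute.mpr
          (Subgroup.mem_center_iff.mp hπu₂ (π h))
      rw [h2]
      group
    rw [pow_mul, e1, e2, commutatorElement_def]
    exact H₁.mul_mem (H₁.mul_mem (H₁.mul_mem hπh hπh₂) (H₁.inv_mem hπh)) (H₁.inv_mem hπh₂)
  -- the quotient K₁ ⧸ H₁ is a finitely generated abelian torsion group, hence finite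
  haveI hnorm : (H₁.subgroupOf K₁).Normal := by
    constructor
    rintro ⟨a, haK⟩ ha ⟨g, hgK⟩
    rw [Subgroup.mem_subgroupOf] at ha ⊢
    obtain ⟨h, hh, z, hz, rfl⟩ := hdecomp g hgK
    show (h * z) * a * (h * z)⁻¹ ∈ H₁
    have h1 : z * a = a * z := (Subgroup.mem_center_iff.mp (hcentral z hz) a).symm
    have h2 : (h * z) * a * (h * z)⁻¹ = h * a * h⁻¹ :=
      calc (h * z) * a * (h * z)⁻¹ = h * (z * a) * (z⁻¹ * h⁻¹) := by group
        _ = h * (a * z) * (z⁻¹ * h⁻¹) := by rw [h1]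
        _ = h * a * h⁻¹ := by group
    rw [h2]
    exact H₁.mul_mem (H₁.mul_mem hh ha) (H₁.inv_mem hh)
  have hrep : ∀ q : K₁ ⧸ H₁.subgroupOf K₁, ∃ z, ∃ hz : z ∈ Z₁,
      q = QuotientGroup.mk (⟨z, hZ₁K₁ hz⟩ : K₁) := by
    intro q
    obtain ⟨k, rfl⟩ := QuotientGroup.mk_surjective q
    obtain ⟨h, hh, z, hz, hk⟩ := hdecomp (k : G ⧸ L2) k.2
    refine ⟨z, hz, ?_⟩
    rw [QuotientGroup.eq, Subgroup.mem_subgroupOf]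
    show ((k : G ⧸ L2)⁻¹ * z) ∈ H₁
    rw [← hk]
    have hcz : h⁻¹ * z = z * h⁻¹ := Subgroup.mem_center_iff.mp (hcentral z hz) h⁻¹
    have h1 : (h * z)⁻¹ * z = h⁻¹ :=
      calc (h * z)⁻¹ * z = z⁻¹ * (h⁻¹ * z) := by group
        _ = z⁻¹ * (z * h⁻¹) := by rw [hcz]
        _ = h⁻¹ := by group
    rw [h1]
    exact H₁.inv_mem hh
  have hcomm : ∀ q₁ q₂ : K₁ ⧸ H₁.subgroupOf K₁, q₁ * q₂ = q₂ * q₁ := by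
    intro q₁ q₂
    obtain ⟨z₁, hz₁, rfl⟩ := hrep q₁
    obtain ⟨z₂, hz₂, rfl⟩ := hrep q₂
    show QuotientGroup.mk ((⟨z₁, _⟩ : K₁) * ⟨z₂, _⟩) = QuotientGroup.mk ((⟨z₂, _⟩ : K₁) * ⟨z₁, _⟩)
    congr 1
    exact Subtype.ext (Subgroup.mem_center_iff.mp (hcentral z₁ hz₁) z₂).symm
  haveI : (H ⊔ L1).FiniteIndex := ⟨hj⟩
  haveI : Group.FG ((H ⊔ L1) : Subgroup G) := Subgroup.fg_of_index_ne_zero _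
  haveI : Group.FG K₁ := Group.fg_of_surjective (π.subgroupMap_surjective (H ⊔ L1))
  haveI : Group.FG (K₁ ⧸ H₁.subgroupOf K₁) :=
    Group.fg_of_surjective (QuotientGroup.mk'_surjective (H₁.subgroupOf K₁))
  have htor : Monoid.IsTorsion (K₁ ⧸ H₁.subgroupOf K₁) := by
    intro q
    obtain ⟨z, hz, rfl⟩ := hrep q
    obtain ⟨-, n, hn, hzn⟩ := hZT hz
    refine isOfFinOrder_iff_pow_eq_one.mpr ⟨n, hn, ?_⟩
    show QuotientGroup.mk ((⟨z, _⟩ : K₁) ^ n) = 1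
    rw [QuotientGroup.eq_one_iff, Subgroup.mem_subgroupOf]
    exact hzn
  haveI : Finite (K₁ ⧸ H₁.subgroupOf K₁) := by
    letI : CommGroup (K₁ ⧸ H₁.subgroupOf K₁) :=
      { (inferInstance : Group (K₁ ⧸ H₁.subgroupOf K₁)) with mul_comm := hcomm }
    exact CommGroup.finite_of_fg_torsion _ htor
  have hrel : H₁.relIndex K₁ ≠ 0 := Subgroup.index_ne_zero_of_finite
  have h2 : (H ⊔ L2).relIndex (H ⊔ L1) ≠ 0 := by
    have hcomap : H ⊔ L2 = H₁.comap π := by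
      rw [hH₁def, Subgroup.comap_map_eq, QuotientGroup.ker_mk']
    rw [hcomap, Subgroup.relIndex_comap]
    exact hrel
  have h3 := Subgroup.relIndex_mul_index (sup_le_sup_left hL21 H)
  intro h0
  rw [h0] at h3
  exact Nat.mul_ne_zero h2 hj h3

/-- If `H` is a subgroup of infinite index in a finitely generated nilpotent group `G`,
then there exists a normal subgroup `N` of `G` containing `H` which has infinite index
in `G`. -/
theorem exists_normal_subgroup_of_infinite_index {G : Type*} [Group G] [Group.FG G]
    [Group.IsNilpotent G] (H : Subgroup G) (hH : Infinite (G ⧸ H)) :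
    ∃ N : Subgroup G, N.Normal ∧ H ≤ N ∧ Infinite (G ⧸ N) := by
  refine ⟨H ⊔ Subgroup.lowerCentralSeries (⊤ : Subgroup G) 1, ?_, le_sup_left, ?_⟩
  · constructor
    intro n hn g
    have h1 : ⁅g, n⁆ * n = g * n * g⁻¹ := by rw [commutatorElement_def]; group
    rw [← h1]
    refine Subgroup.mul_mem _ (le_sup_right (α := Subgroup G) ?_) hn
    rw [Subgroup.top_lowerCentralSeries_one, commutator_def]
    exact Subgroup.commutator_mem_commutator (Subgroup.mem_top g) (Subgroup.mem_top n)
  · by_contra hfin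
    rw [not_infinite_iff_finite] at hfin
    haveI := hfin
    have hidx : (H ⊔ Subgroup.lowerCentralSeries (⊤ : Subgroup G) 1).index ≠ 0 := Subgroup.index_ne_zero_of_finite
    have key : ∀ j, (H ⊔ Subgroup.lowerCentralSeries (⊤ : Subgroup G) (j + 1)).index ≠ 0 := by
      intro j
      induction j with
      | zero => exact hidx
      | succ n ih => exact step_lemma H n ih
    obtain ⟨n, hn⟩ := Subgroup.nilpotent_iff_lowerCentralSeries.mp ‹Group.IsNilpotent G›
    have hbot : Subgroup.lowerCentralSeries (⊤ : Subgroup G) (n + 1) = ⊥ :=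
      le_bot_iff.mp (hn ▸ Subgroup.lowerCentralSeries_antitone ⊤ (Nat.le_succ n))
    have hHidx : H.index ≠ 0 := by
      have := key n
      rwa [hbot, sup_bot_eq] at this
    refine hHidx ?_
    rw [Subgroup.index_eq_card]
    exact Nat.card_eq_zero_of_infinite
end

section
/- Let G be a nilpotent group and g : ℕ → G a polynomial sequence such that G is generated by the set {g(n) : n ∈ ℕ}. Then for every infinite subset A ⊆ ℕ, the subgroup of G generated by {g(n) : n ∈ A} has finite index in G. -/
namespace PaperPoly

open scoped commutatorElement

theorem DegLE.congr {S : Type*} [AddCommSemigroup S] {G : Type*} [Group G] :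
    ∀ (d : ℕ) (f g : S → G), (∀ t, f t = g t) → DegLE d f → DegLE d g := by
  intro d
  induction d with
  | zero => intro f g h hf t t'; rw [← h, ← h]; exact hf t t'
  | succ d ih =>
    intro f g h hf s
    exact ⟨ih _ _ (fun t => by rw [h, h]) (hf s).1, ih _ _ (fun t => by rw [h, h]) (hf s).2⟩

theorem DegLE.comp {S : Type*} [AddCommSemigroup S] {G G' : Type*} [Group G] [Group G']
    (φ : G →* G') : ∀ (d : ℕ) (f : S → G), DegLE d f → DegLE d (fun s => φ (f s)) := by
  intro d
  induction d with
  | zero => intro f hf t t'; exact congrArg φ (hf t t')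
  | succ d ih =>
    intro f hf s
    constructor
    · exact DegLE.congr d _ _ (fun t => by simp) (ih _ (hf s).1)
    · exact DegLE.congr d _ _ (fun t => by simp) (ih _ (hf s).2)

/-- The subgroup generated by the values of a polynomial sequence is finitely generated. -/
theorem fg_closure_range {G : Type*} [Group G] :
    ∀ (d : ℕ) (f : ℕ → G), DegLE d f → (Subgroup.closure (Set.range f)).FG := by
  intro d
  induction d with
  | zero =>
    intro f hf
    have : Set.range f = {f 0} := by
      ext x
      constructor
      · rintro ⟨n, rfl⟩; exact hf n 0
      · rintro rfl; exact ⟨0, rfl⟩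
    rw [this]
    exact (Subgroup.fg_iff _).mpr ⟨{f 0}, rfl, Set.finite_singleton _⟩
  | succ d ih =>
    intro f hf
    set h : ℕ → G := fun t => f (1 + t) * (f t)⁻¹ with hh
    have hdeg : DegLE d h := (hf 1).1
    obtain ⟨T, hT, hTfin⟩ := (Subgroup.fg_iff _).mp (ih h hdeg)
    have key : Subgroup.closure (Set.range f) = Subgroup.closure ({f 0} ∪ Set.range h) := by
      apply le_antisymm
      · rw [Subgroup.closure_le]
        rintro x ⟨n, rfl⟩
        induction n with
        | zero => exact Subgroup.subset_closure (Or.inl rfl)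
        | succ n ihn =>
          have : f (n + 1) = h n * f n := by
            rw [hh]; simp [Nat.add_comm 1 n]
          rw [this]
          exact Subgroup.mul_mem _ (Subgroup.subset_closure (Or.inr ⟨n, rfl⟩)) ihn
      · rw [Subgroup.closure_le]
        rintro x (rfl | ⟨n, rfl⟩)
        · exact Subgroup.subset_closure ⟨0, rfl⟩
        · exact Subgroup.mul_mem _ (Subgroup.subset_closure ⟨1 + n, rfl⟩)
            (Subgroup.inv_mem _ (Subgroup.subset_closure ⟨n, rfl⟩))
    rw [key, Subgroup.closure_union, ← hT, ← Subgroup.closure_union]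
    exact (Subgroup.fg_iff _).mpr ⟨_, rfl, (Set.finite_singleton (f 0)).union hTfin⟩



section D
variable {Q : Type*} [Group Q]

theorem comm_hom_right {a c : Q} (h : ⁅a, c⁆ ∈ Subgroup.center Q) (b : Q) :
    ⁅a, b * c⁆ = ⁅a, b⁆ * ⁅a, c⁆ := by
  have key : ⁅a, b * c⁆ = ⁅a, b⁆ * (b * ⁅a, c⁆ * b⁻¹) := by
    simp only [commutatorElement_def]; group
  rw [key]
  have h2 : b * ⁅a, c⁆ * b⁻¹ = ⁅a, c⁆ := by
    rw [Subgroup.mem_center_iff.mp h b]; group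
  rw [h2]

theorem comm_hom_left {a' b : Q} (h : ⁅a', b⁆ ∈ Subgroup.center Q) (a : Q) :
    ⁅a * a', b⁆ = ⁅a, b⁆ * ⁅a', b⁆ := by
  have key : ⁅a * a', b⁆ = (a * ⁅a', b⁆ * a⁻¹) * ⁅a, b⁆ := by
    simp only [commutatorElement_def]; group
  rw [key]
  have h1 : a * ⁅a', b⁆ * a⁻¹ = ⁅a', b⁆ := by
    rw [Subgroup.mem_center_iff.mp h a]; group
  rw [h1, Subgroup.mem_center_iff.mp h ⁅a, b⁆]

theorem comm_pow_right {a b : Q} (h : ⁅a, b⁆ ∈ Subgroup.center Q) (m : ℕ) :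
    ⁅a, b ^ m⁆ = ⁅a, b⁆ ^ m := by
  induction m with
  | zero => simp
  | succ m ih => rw [pow_succ, comm_hom_right h, ih, pow_succ]

theorem comm_pow_left {a b : Q} (h : ⁅a, b⁆ ∈ Subgroup.center Q) (m : ℕ) :
    ⁅a ^ m, b⁆ = ⁅a, b⁆ ^ m := by
  induction m with
  | zero => simp
  | succ m ih => rw [pow_succ, comm_hom_left h, ih, pow_succ]

theorem comm_central_left {s : Q} (hs : s ∈ Subgroup.center Q) (u v : Q) :
    ⁅u * s, v⁆ = ⁅u, v⁆ := by
  have h1 : ∀ g : Q, s * g = g * s := fun g => (Subgroup.mem_center_iff.mp hs g).symm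
  have key : (u * s) * v * (u * s)⁻¹ = u * v * u⁻¹ := by
    rw [mul_inv_rev]
    calc u * s * v * (s⁻¹ * u⁻¹) = u * (s * v * s⁻¹) * u⁻¹ := by group
    _ = u * v * u⁻¹ := by rw [h1 v]; group
  rw [commutatorElement_def, commutatorElement_def, key]

theorem comm_central_right {t : Q} (ht : t ∈ Subgroup.center Q) (u v : Q) :
    ⁅u, v * t⁆ = ⁅u, v⁆ := by
  have h1 : ∀ g : Q, t * g = g * t := fun g => (Subgroup.mem_center_iff.mp ht g).symm
  have key : u * (v * t) * u⁻¹ * (v * t)⁻¹ = u * v * u⁻¹ * v⁻¹ := by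
    rw [mul_inv_rev]
    calc u * (v * t) * u⁻¹ * (t⁻¹ * v⁻¹) = u * v * (t * u⁻¹ * t⁻¹) * v⁻¹ := by group
    _ = u * v * u⁻¹ * v⁻¹ := by rw [h1 u⁻¹]; group
  rw [commutatorElement_def, commutatorElement_def, key]

/-- The key power-descent step, in a group where `γ_{i+1}` is central. -/
theorem step_central (H : Subgroup Q) (i : ℕ)
    (hc : Subgroup.lowerCentralSeries (⊤ : Subgroup Q) (i + 1) ≤ Subgroup.center Q) (m : ℕ)
    (hm : ∀ x : Q, x ^ m ∈ H ⊔ Subgroup.lowerCentralSeries (⊤ : Subgroup Q) (i + 1)) :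
    ∀ x : Q, x ^ (m * (m * m)) ∈ H := by
  set Z := Subgroup.lowerCentralSeries (⊤ : Subgroup Q) (i + 1) with hZ
  have hdecomp : ∀ x : Q, ∃ u ∈ H, ∃ s ∈ Z, x ^ m = u * s := by
    intro x
    have hx := hm x
    rw [← SetLike.mem_coe, Subgroup.mul_normal] at hx
    obtain ⟨u, hu, s, hs, h⟩ := hx
    exact ⟨u, hu, s, hs, h.symm⟩
  have hcen : ∀ a ∈ Subgroup.lowerCentralSeries (⊤ : Subgroup Q) i, ∀ b : Q, ⁅a, b⁆ ∈ Subgroup.center Q := by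
    intro a ha b
    refine hc ?_
    show ⁅a, b⁆ ∈ Subgroup.lowerCentralSeries (⊤ : Subgroup Q) (i + 1)
    rw [Subgroup.lowerCentralSeries_succ]
    exact Subgroup.commutator_mem_commutator ha (Subgroup.mem_top b)
  have claimA : ∀ a ∈ Subgroup.lowerCentralSeries (⊤ : Subgroup Q) i, ∀ b : Q, ⁅a, b⁆ ^ (m * m) ∈ H := by
    intro a ha b
    have e1 : ⁅a, b⁆ ^ (m * m) = ⁅a ^ m, b ^ m⁆ := by
      rw [comm_pow_left (hcen a ha (b ^ m)) m, comm_pow_right (hcen a ha b) m, ← pow_mul,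
        Nat.mul_comm]
    obtain ⟨u, hu, s, hs, ea⟩ := hdecomp a
    obtain ⟨v, hv, t, ht, eb⟩ := hdecomp b
    rw [e1, ea, eb, comm_central_left (hc hs), comm_central_right (hc ht),
      commutatorElement_def]
    exact H.mul_mem (H.mul_mem (H.mul_mem hu hv) (H.inv_mem hu)) (H.inv_mem hv)
  -- central elements of Z have their (m*m)-th power in H
  let W : Subgroup Q :=
    { carrier := {y | y ∈ Subgroup.center Q ∧ y ^ (m * m) ∈ H}
      one_mem' := ⟨Subgroup.one_mem _, by simp [H.one_mem]⟩
      mul_mem' := by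
        rintro y y' ⟨hy, hyH⟩ ⟨hy', hyH'⟩
        refine ⟨Subgroup.mul_mem _ hy hy', ?_⟩
        have hcom : Commute y y' := Subgroup.mem_center_iff.mp hy' y
        rw [hcom.mul_pow]
        exact H.mul_mem hyH hyH'
      inv_mem' := by
        rintro y ⟨hy, hyH⟩
        exact ⟨Subgroup.inv_mem _ hy, by rw [inv_pow]; exact H.inv_mem hyH⟩ }
  have hZW : Z ≤ W := by
    rw [hZ, Subgroup.lowerCentralSeries_succ]
    refine Subgroup.commutator_le.mpr fun a ha b _ => ?_
    exact ⟨hcen a ha b, claimA a ha b⟩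
  intro x
  obtain ⟨u, hu, s, hs, ex⟩ := hdecomp x
  rw [pow_mul, ex]
  have hcom : Commute u s := Subgroup.mem_center_iff.mp (hc hs) u
  rw [hcom.mul_pow]
  exact H.mul_mem (H.pow_mem hu _) (hZW hs).2
end D



/-- A finitely generated commutative group of finite exponent is finite. -/
theorem finite_of_fg_comm_exponent {V : Type*} [CommGroup V] [Group.FG V] (K : ℕ)
    (hK : 1 ≤ K) (h : ∀ x : V, x ^ K = 1) : Finite V := by
  obtain ⟨S, hS, hSfin⟩ := Group.fg_iff.mp ‹Group.FG V›
  classical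
  haveI := hSfin.fintype
  -- the map sending exponent vectors to products
  set F : (S → Fin K) → V := fun c => ∏ s : S, (s : V) ^ (c s : ℕ) with hF
  have hmod : ∀ (x : V) (n : ℕ), x ^ (n % K) = x ^ n := fun x n =>
    (pow_eq_pow_mod n (h x)).symm
  have hsur : Function.Surjective F := by
    intro x
    -- the range of F is a subgroup containing S
    let W : Subgroup V :=
      { carrier := Set.range F
        one_mem' := ⟨fun _ => ⟨0, hK⟩, by simp [hF]⟩
        mul_mem' := by
          rintro a b ⟨c, rfl⟩ ⟨c', rfl⟩
          refine ⟨fun s => ⟨((c s : ℕ) + (c' s : ℕ)) % K, Nat.mod_lt _ hK⟩, ?_⟩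
          rw [hF]
          simp only
          rw [← Finset.prod_mul_distrib]
          refine Finset.prod_congr rfl fun s _ => ?_
          rw [hmod, pow_add]
        inv_mem' := by
          rintro a ⟨c, rfl⟩
          refine ⟨fun s => ⟨(K - (c s : ℕ)) % K, Nat.mod_lt _ hK⟩, ?_⟩
          rw [hF]
          simp only
          rw [← Finset.prod_inv_distrib]
          refine Finset.prod_congr rfl fun s _ => ?_
          rw [hmod]
          have : (s : V) ^ (c s : ℕ) * (s : V) ^ (K - (c s : ℕ)) = 1 := by
            rw [← pow_add, Nat.add_sub_cancel' (le_of_lt (c s).2), h]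
          rw [eq_inv_iff_mul_eq_one, mul_comm, this] }
    have hle : Subgroup.closure S ≤ W := by
      rw [Subgroup.closure_le]
      intro s hs
      refine ⟨fun t => if t = ⟨s, hs⟩ then ⟨1 % K, Nat.mod_lt _ hK⟩ else ⟨0, hK⟩, ?_⟩
      rw [hF]
      simp only
      rw [Finset.prod_eq_single (⟨s, hs⟩ : S)]
      · simp [hmod]
      · intro t _ ht; simp [ht]
      · intro ht; exact absurd (Finset.mem_univ _) ht
    have : x ∈ W := by rw [hS] at hle; exact hle trivial
    exact this
  exact Finite.of_surjective F hsur




open Subgroup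


/-- A finitely generated nilpotent group of finite exponent is finite. -/
theorem finite_of_fg_nilpotent_exponent :
    ∀ (c : ℕ) (G : Type u) [Group G], ∀ [Group.FG G] [Group.IsNilpotent G],
      Group.nilpotencyClass G ≤ c → ∀ K : ℕ, 1 ≤ K → (∀ x : G, x ^ K = 1) → Finite G := by
  intro c
  induction c with
  | zero =>
    intro G _ _ _ hc K hK h
    have : Group.nilpotencyClass G = 0 := Nat.le_zero.mp hc
    haveI : Subsingleton G := nilpotencyClass_zero_iff_subsingleton.mp this
    exact Finite.of_subsingleton
  | succ c ih =>
    intro G _ _ _ hc K hK h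
    set Z := Subgroup.center G
    haveI : Group.FG (G ⧸ Z) :=
      Group.fg_of_surjective (f := QuotientGroup.mk' Z) (QuotientGroup.mk'_surjective Z)
    have hclass : Group.nilpotencyClass (G ⧸ Z) ≤ c := by
      rw [nilpotencyClass_quotient_center]
      omega
    have hQfin : Finite (G ⧸ Z) := by
      refine ih (G ⧸ Z) hclass K hK ?_
      intro y
      obtain ⟨x, rfl⟩ := QuotientGroup.mk'_surjective Z y
      rw [← map_pow, h, map_one]
    -- finitely many commutators
    have hcs : (commutatorSet G).Finite := by
      have : commutatorSet G =
          Set.range (fun p : (G ⧸ Z) × (G ⧸ Z) => ⁅p.1.out, p.2.out⁆) := by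
        ext x
        constructor
        · rintro ⟨g₁, g₂, rfl⟩
          refine ⟨(QuotientGroup.mk g₁, QuotientGroup.mk g₂), ?_⟩
          simp only
          obtain ⟨z₁, e₁⟩ := QuotientGroup.mk_out_eq_mul Z g₁
          obtain ⟨z₂, e₂⟩ := QuotientGroup.mk_out_eq_mul Z g₂
          rw [e₁, e₂, comm_central_left z₁.2, comm_central_right z₂.2]
        · rintro ⟨p, rfl⟩
          exact ⟨p.1.out, p.2.out, rfl⟩
      rw [this]
      exact Set.finite_range _
    haveI : Finite (commutatorSet G) := hcs.to_subtype
    haveI hGc : Finite (_root_.commutator G) := inferInstance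
    -- the abelianization is finite
    haveI : Group.FG (Abelianization G) :=
      Group.fg_of_surjective (f := Abelianization.of (G := G))
        (fun y => Quotient.inductionOn' y fun x => ⟨x, rfl⟩)
    have hab : Finite (Abelianization G) := by
      refine finite_of_fg_comm_exponent K hK ?_
      intro y
      obtain ⟨x, rfl⟩ : ∃ x, Abelianization.of x = y :=
        Quotient.inductionOn' y fun x => ⟨x, rfl⟩
      rw [← map_pow, h, map_one]
    have hquot : Finite (G ⧸ _root_.commutator G) := hab
    exact Finite.of_equiv _ (Subgroup.groupEquivQuotientProdSubgroup (s := _root_.commutator G)).symm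



section E
variable {G : Type*} [Group G]

theorem map_lowerCentralSeries_surjective {G' : Type*} [Group G'] (f : G →* G')
    (hf : Function.Surjective f) (n : ℕ) :
    Subgroup.map f (Subgroup.lowerCentralSeries (⊤ : Subgroup G) n) = Subgroup.lowerCentralSeries (⊤ : Subgroup G') n := by
  induction n with
  | zero =>
    simp [Subgroup.lowerCentralSeries_zero, Subgroup.map_top_of_surjective f hf]
  | succ n ih =>
    show Subgroup.map f ⁅Subgroup.lowerCentralSeries (⊤ : Subgroup G) n, ⊤⁆ = ⁅Subgroup.lowerCentralSeries (⊤ : Subgroup G') n, ⊤⁆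
    rw [Subgroup.map_commutator, ih, Subgroup.map_top_of_surjective f hf]

theorem descent (H : Subgroup G) (k : ℕ) (hk : 1 ≤ k)
    (h1 : ∀ x : G, x ^ k ∈ H ⊔ Subgroup.lowerCentralSeries (⊤ : Subgroup G) 1) :
    ∀ i : ℕ, ∃ m : ℕ, 1 ≤ m ∧ ∀ x : G, x ^ m ∈ H ⊔ Subgroup.lowerCentralSeries (⊤ : Subgroup G) (i + 1) := by
  intro i
  induction i with
  | zero => exact ⟨k, hk, h1⟩
  | succ i ih =>
    obtain ⟨m, hm1, hm⟩ := ih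
    set N := Subgroup.lowerCentralSeries (⊤ : Subgroup G) (i + 2) with hN
    set π := QuotientGroup.mk' N with hπ
    have hsur : Function.Surjective π := QuotientGroup.mk'_surjective N
    have hbot : Subgroup.lowerCentralSeries (⊤ : Subgroup (G ⧸ N)) (i + 2) = ⊥ := by
      rw [← map_lowerCentralSeries_surjective π hsur]
      rw [Subgroup.map_eq_bot_iff, hπ, QuotientGroup.ker_mk']
    have hc : Subgroup.lowerCentralSeries (⊤ : Subgroup (G ⧸ N)) (i + 1) ≤ Subgroup.center (G ⧸ N) := by
      have : ⁅Subgroup.lowerCentralSeries (⊤ : Subgroup (G ⧸ N)) (i + 1), (⊤ : Subgroup (G ⧸ N))⁆ = ⊥ := hbot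
      have h2 := Subgroup.commutator_eq_bot_iff_le_centralizer.mp this
      rwa [Subgroup.coe_top, Subgroup.centralizer_univ] at h2
    have hmQ : ∀ y : G ⧸ N, y ^ m ∈ H.map π ⊔ Subgroup.lowerCentralSeries (⊤ : Subgroup (G ⧸ N)) (i + 1) := by
      intro y
      obtain ⟨x, rfl⟩ := hsur y
      have := hm x
      have h3 : π (x ^ m) ∈ (H ⊔ Subgroup.lowerCentralSeries (⊤ : Subgroup G) (i + 1)).map π :=
        Subgroup.mem_map_of_mem π this
      rw [Subgroup.map_sup, map_lowerCentralSeries_surjective π hsur (i + 1)] at h3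
      rw [← map_pow]
      exact h3
    have key := step_central (H.map π) i hc m hmQ
    refine ⟨m * (m * m), ?_, fun x => ?_⟩
    · have := Nat.mul_le_mul hm1 (Nat.mul_le_mul hm1 hm1)
      simpa using this
    have := key (π x)
    rw [← map_pow] at this
    have h4 : x ^ (m * (m * m)) ∈ Subgroup.comap π (H.map π) := this
    rwa [Subgroup.comap_map_eq, hπ, QuotientGroup.ker_mk'] at h4

/-- In a f.g. nilpotent group, a subgroup containing `K`-th powers for all elements,
up to the commutator subgroup, contains a uniform power of every element. -/
theorem descent_full [Group.IsNilpotent G] (H : Subgroup G) (k : ℕ) (hk : 1 ≤ k)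
    (h1 : ∀ x : G, x ^ k ∈ H ⊔ Subgroup.lowerCentralSeries (⊤ : Subgroup G) 1) :
    ∃ m : ℕ, 1 ≤ m ∧ ∀ x : G, x ^ m ∈ H := by
  obtain ⟨n, hn⟩ := Subgroup.nilpotent_iff_lowerCentralSeries.mp ‹Group.IsNilpotent G›
  obtain ⟨m, hm1, hm⟩ := descent H k hk h1 n
  refine ⟨m, hm1, fun x => ?_⟩
  have h2 : Subgroup.lowerCentralSeries (⊤ : Subgroup G) (n + 1) = ⊥ :=
    le_bot_iff.mp (hn ▸ Subgroup.lowerCentralSeries_antitone ⊤ (Nat.le_succ n))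
  have h3 := hm x
  rwa [h2, sup_bot_eq] at h3

/-- In a f.g. nilpotent group, a subgroup containing a uniform power of every element
has finite index. -/
theorem finiteIndex_of_pow_mem [Group.FG G] [Group.IsNilpotent G] (H : Subgroup G)
    (K : ℕ) (hK : 1 ≤ K) (h : ∀ x : G, x ^ K ∈ H) : H.FiniteIndex := by
  set T := Subgroup.closure {x : G | ∃ g : G, g ^ K = x} with hT
  have hTH : T ≤ H := by
    rw [hT, Subgroup.closure_le]
    rintro x ⟨g, rfl⟩
    exact h g
  haveI : T.Normal := by
    constructor
    intro n hn g
    have hmap : Subgroup.map (MulAut.conj g).toMonoidHom T ≤ T := by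
      rw [hT, MonoidHom.map_closure]
      apply Subgroup.closure_mono
      rintro y ⟨x, ⟨g', rfl⟩, rfl⟩
      exact ⟨(MulAut.conj g) g', by rw [← map_pow]; rfl⟩
    have : (MulAut.conj g) n ∈ T := hmap (Subgroup.mem_map_of_mem _ hn)
    simpa [MulAut.conj_apply] using this
  haveI : Group.FG (G ⧸ T) := Group.fg_of_surjective (QuotientGroup.mk'_surjective T)
  haveI : Group.IsNilpotent (G ⧸ T) :=
    nilpotent_of_surjective _ (QuotientGroup.mk'_surjective T)
  have hfin : Finite (G ⧸ T) := by
    refine finite_of_fg_nilpotent_exponent (Group.nilpotencyClass (G ⧸ T)) (G ⧸ T) le_rfl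
      K hK ?_
    intro y
    obtain ⟨x, rfl⟩ := QuotientGroup.mk'_surjective T y
    rw [← map_pow]
    rw [QuotientGroup.mk'_apply, QuotientGroup.eq_one_iff]
    exact Subgroup.subset_closure ⟨x, rfl⟩
  haveI := hfin
  haveI hTfi : T.FiniteIndex := Subgroup.finiteIndex_of_finite_quotient (H := T)
  refine ⟨fun h0 => ?_⟩
  have hdvd := Subgroup.index_dvd_of_le hTH
  rw [h0] at hdvd
  exact hTfi.index_ne_zero (zero_dvd_iff.mp hdvd)

end E
/-- The forward difference operator. -/
def Dm {G : Type*} [Group G] (f : ℕ → G) : ℕ → G := fun t => f (1 + t) * (f t)⁻¹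

theorem degLE_Dm {G : Type*} [Group G] {d : ℕ} {f : ℕ → G} (hf : DegLE (d + 1) f) :
    DegLE d (Dm f) := (hf 1).1

theorem taylor {V : Type*} [CommGroup V] :
    ∀ (d : ℕ) (f : ℕ → V), DegLE d f → ∀ n : ℕ,
      f n = ∏ i ∈ Finset.range (d + 1), (Dm^[i] f 0) ^ n.choose i := by
  intro d
  induction d with
  | zero =>
    intro f hf n
    rw [hf n 0]
    simp
  | succ d ih =>
    intro f hf n
    induction n with
    | zero =>
      rw [Finset.prod_eq_single 0]
      · simp
      · intro b _ hb
        obtain ⟨b, rfl⟩ := Nat.exists_eq_succ_of_ne_zero hb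
        simp [Nat.choose_zero_succ]
      · simp
    | succ n ihn =>
      have hsplit : f (n + 1) = Dm f n * f n := by
        rw [Dm, Nat.add_comm 1 n, inv_mul_cancel_right]
      have e1 : Dm f n = ∏ i ∈ Finset.range (d + 1), (Dm^[i + 1] f 0) ^ n.choose i := by
        rw [ih (Dm f) (degLE_Dm hf) n]
        exact Finset.prod_congr rfl fun i _ => by rw [Function.iterate_succ_apply]
      rw [hsplit, e1, ihn]
      rw [Finset.prod_range_succ' (fun i => (Dm^[i] f 0) ^ n.choose i) (d + 1),
        Finset.prod_range_succ' (fun i => (Dm^[i] f 0) ^ (n + 1).choose i) (d + 1)]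
      simp only [Nat.choose_succ_succ, pow_add, Nat.choose_zero_right]
      rw [Finset.prod_mul_distrib]
      ring_nf
      simp [Nat.succ_eq_add_one, mul_assoc]
      simp only [Nat.add_comm]

theorem zpow_finset_sum {G : Type*} [CommGroup G] (x : G) {ι : Type*} (s : Finset ι) (c : ι → ℤ) :
    x ^ (∑ j ∈ s, c j) = ∏ j ∈ s, x ^ c j := by
  classical
  induction s using Finset.induction with
  | empty => simp
  | insert _ _ hni ih =>
    rename_i a s'
    rw [Finset.sum_insert hni, Finset.prod_insert hni, zpow_add, ih]

/-- The abelian case: an infinite subsequence of a generating polynomial sequence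
generates a subgroup containing a uniform power of every element. -/
theorem abelian_poly_pow {V : Type*} [CommGroup V] (d : ℕ) (f : ℕ → V) (hf : DegLE d f)
    (hgen : Subgroup.closure (Set.range f) = ⊤) (A : Set ℕ) (hA : A.Infinite) :
    ∃ K : ℕ, 1 ≤ K ∧ ∀ a : V, a ^ K ∈ Subgroup.closure (f '' A) := by
  classical
  set v : ℕ → V := fun i => Dm^[i] f 0 with hv
  set e : Fin (d + 1) → ℕ := fun j => (Set.Infinite.natEmbedding A hA (j : ℕ)).1 with he
  have heA : ∀ j, e j ∈ A := fun j => (Set.Infinite.natEmbedding A hA (j : ℕ)).2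
  have hinj : Function.Injective e := by
    intro j k h
    have h2 : ((j : ℕ) : ℕ) = (k : ℕ) := (Set.Infinite.natEmbedding A hA).injective
      (Subtype.ext h)
    exact Fin.val_injective h2
  set Bz : Matrix (Fin (d + 1)) (Fin (d + 1)) ℤ :=
    Matrix.of (fun j i => ((e j).choose (i : ℕ) : ℤ)) with hBz
  -- the determinant of Bz is nonzero
  set nQ : Fin (d + 1) → ℚ := fun j => ((e j : ℕ) : ℚ) with hnQ
  set T : Matrix (Fin (d + 1)) (Fin (d + 1)) ℚ :=
    Matrix.of (fun k i => (descPochhammer ℚ (i : ℕ)).coeff (k : ℕ) / (Nat.factorial i : ℚ))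
    with hT
  have hfact : (Matrix.vandermonde nQ) * T = Bz.map (Int.cast) := by
    ext j i
    rw [Matrix.mul_apply]
    have hdeg : (descPochhammer ℚ (i : ℕ)).natDegree < d + 1 := by
      rw [descPochhammer_natDegree]; exact i.2
    have heval := Polynomial.eval_eq_sum_range' hdeg (nQ j)
    have hstep : ∀ k : Fin (d + 1), Matrix.vandermonde nQ j k * T k i =
        ((descPochhammer ℚ (i : ℕ)).coeff (k : ℕ) * nQ j ^ (k : ℕ)) / (Nat.factorial i : ℚ) :=
      fun k => by rw [Matrix.vandermonde_apply, hT]; simp only [Matrix.of_apply]; ring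
    rw [Finset.sum_congr rfl fun k _ => hstep k, ← Finset.sum_div,
      ← Fin.sum_univ_eq_sum_range (fun k => (descPochhammer ℚ (i : ℕ)).coeff k * nQ j ^ k)
        (d + 1)] at *
    rw [← heval, hnQ]
    simp only
    rw [descPochhammer_eval_eq_descFactorial ℚ (e j) (i : ℕ),
      Nat.descFactorial_eq_factorial_mul_choose]
    have hright : (Bz.map (Int.cast : ℤ → ℚ)) j i = ((e j).choose (i : ℕ) : ℚ) := by
      rw [hBz]; simp [Matrix.map_apply]
    rw [hright, Nat.cast_mul]
    exact mul_div_cancel_left₀ _ (by exact_mod_cast Nat.factorial_ne_zero (i : ℕ))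
  have hTtri : T.BlockTriangular id := by
    intro i j hij
    rw [hT]
    simp only [Matrix.of_apply]
    rw [Polynomial.coeff_eq_zero_of_natDegree_lt, zero_div]
    rw [descPochhammer_natDegree]
    exact hij
  have hdetT : T.det ≠ 0 := by
    rw [Matrix.det_of_upperTriangular hTtri]
    refine Finset.prod_ne_zero_iff.mpr fun i _ => ?_
    rw [hT]
    simp only [Matrix.of_apply]
    have hmon : (descPochhammer ℚ (i : ℕ)).coeff (i : ℕ) = 1 := by
      have := (monic_descPochhammer ℚ (i : ℕ)).coeff_natDegree
      rwa [descPochhammer_natDegree] at this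
    rw [hmon]
    exact one_div_ne_zero (by exact_mod_cast Nat.factorial_ne_zero (i : ℕ))
  have hdetV : (Matrix.vandermonde nQ).det ≠ 0 := by
    rw [Matrix.det_vandermonde_ne_zero_iff]
    intro j k h
    exact hinj (Nat.cast_injective h)
  have hE : Bz.det ≠ 0 := by
    intro h0
    have hc : ((Bz.det : ℤ) : ℚ) = (Bz.map (Int.cast)).det := (Int.castRingHom ℚ).map_det Bz
    rw [h0, ← hfact, Matrix.det_mul] at hc
    exact mul_ne_zero hdetV hdetT (by exact_mod_cast hc.symm)
  set E : ℤ := Bz.det with hEdef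
  set adj := Bz.adjugate with hadjdef
  have hadj : adj * Bz = E • 1 := Matrix.adjugate_mul Bz
  -- Taylor expansion at the chosen points
  have hz : ∀ j, f (e j) = ∏ i : Fin (d + 1), v (i : ℕ) ^ (Bz j i) := by
    intro j
    rw [taylor d f hf (e j),
      ← Fin.prod_univ_eq_prod_range (fun i => v i ^ (e j).choose i) (d + 1)]
    exact Finset.prod_congr rfl fun i _ => by rw [hBz, Matrix.of_apply, zpow_natCast]
  -- the key claim
  have hkey : ∀ i : Fin (d + 1), v (i : ℕ) ^ E ∈ Subgroup.closure (f '' A) := by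
    intro i
    have calc1 : ∏ j : Fin (d + 1), f (e j) ^ (adj i j) = v (i : ℕ) ^ E := by
      have c1 : ∀ j : Fin (d + 1), f (e j) ^ (adj i j) =
          ∏ i' : Fin (d + 1), v (i' : ℕ) ^ (adj i j * Bz j i') := by
        intro j
        rw [hz j, ← Finset.prod_zpow]
        exact Finset.prod_congr rfl fun i' _ => by rw [← zpow_mul, mul_comm]
      rw [Finset.prod_congr rfl fun j _ => c1 j, Finset.prod_comm]
      have c2 : ∀ i' : Fin (d + 1), ∏ j : Fin (d + 1), v (i' : ℕ) ^ (adj i j * Bz j i') =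
          v (i' : ℕ) ^ (if i = i' then E else 0) := by
        intro i'
        rw [← zpow_finset_sum]
        congr 1
        have : (∑ j : Fin (d + 1), adj i j * Bz j i') = (adj * Bz) i i' := by
          rw [Matrix.mul_apply]
        rw [this, hadj, Matrix.smul_apply, Matrix.one_apply]
        simp [smul_eq_mul]
      rw [Finset.prod_congr rfl fun i' _ => c2 i']
      rw [Finset.prod_eq_single i]
      · simp
      · intro b _ hb; rw [if_neg (fun h => hb h.symm)]; simp
      · simp
    rw [← calc1]
    exact Subgroup.prod_mem _ fun j _ =>
      Subgroup.zpow_mem _ (Subgroup.subset_closure (Set.mem_image_of_mem f (heA j))) _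
  set K := E.natAbs with hKdef
  have hK1 : 1 ≤ K := Int.natAbs_pos.mpr hE
  let W : Subgroup V :=
    { carrier := {a | a ^ K ∈ Subgroup.closure (f '' A)}
      one_mem' := by simp [Subgroup.one_mem]
      mul_mem' := by
        intro a b ha hb
        show (a * b) ^ K ∈ Subgroup.closure (f '' A)
        rw [mul_pow]
        exact Subgroup.mul_mem _ ha hb
      inv_mem' := by
        intro a ha
        show (a⁻¹) ^ K ∈ Subgroup.closure (f '' A)
        rw [inv_pow]
        exact Subgroup.inv_mem _ ha }
  have hvW : ∀ i : Fin (d + 1), v (i : ℕ) ∈ W := by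
    intro i
    show v (i : ℕ) ^ K ∈ Subgroup.closure (f '' A)
    have hzp : v (i : ℕ) ^ ((K : ℤ)) ∈ Subgroup.closure (f '' A) := by
      rcases Int.natAbs_eq E with h' | h'
      · rw [← h']; exact hkey i
      · have h2 := hkey i
        rw [h', zpow_neg] at h2
        exact (Subgroup.inv_mem_iff _).mp h2
    rwa [zpow_natCast] at hzp
  have htop : (⊤ : Subgroup V) ≤ W := by
    rw [← hgen, Subgroup.closure_le]
    rintro x ⟨n, rfl⟩
    show f n ∈ W
    rw [taylor d f hf n]
    exact Subgroup.prod_mem _ fun i hi =>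
      Subgroup.pow_mem _ (hvW ⟨i, Finset.mem_range.mp hi⟩) _
  exact ⟨K, hK1, fun a => htop (Subgroup.mem_top a)⟩


/-- Let `G` be a nilpotent group and `g : ℕ → G` a polynomial sequence which generates
`G`. Then for every infinite subset `A ⊆ ℕ`, the subgroup generated by `{g n : n ∈ A}`
has finite index in `G`. -/
theorem infinite_subsequence_generates_finite_index {G : Type*} [Group G]
    [Group.IsNilpotent G] (g : ℕ → G) (hg : IsPoly g)
    (hgen : Subgroup.closure (Set.range g) = ⊤)
    (A : Set ℕ) (hA : A.Infinite) :
    (Subgroup.closure (g '' A)).FiniteIndex := by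
  obtain ⟨d, hd⟩ := hg
  haveI hFG : Group.FG G := by
    rw [Group.fg_def, ← hgen]
    exact fg_closure_range d g hd
  set H := Subgroup.closure (g '' A) with hH
  set φ : G →* Abelianization G := Abelianization.of with hφ
  have hsurj : Function.Surjective φ := fun y => Quotient.inductionOn' y fun x => ⟨x, rfl⟩
  set f : ℕ → Abelianization G := fun n => φ (g n) with hf
  have hdf : DegLE d f := DegLE.comp φ d g hd
  have hfgen : Subgroup.closure (Set.range f) = ⊤ := by
    have hr : Set.range f = φ '' Set.range g := by
      rw [hf, ← Set.range_comp]; rfl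
    rw [hr, ← MonoidHom.map_closure, hgen, Subgroup.map_top_of_surjective φ hsurj]
  obtain ⟨K, hK1, hKmem⟩ := abelian_poly_pow d f hdf hfgen A hA
  have himg : Subgroup.closure (f '' A) = H.map φ := by
    rw [hH, MonoidHom.map_closure, Set.image_image]
  have hker : φ.ker = commutator G := by
    ext x
    rw [MonoidHom.mem_ker]
    exact QuotientGroup.eq_one_iff x
  have hpow : ∀ x : G, x ^ K ∈ H ⊔ Subgroup.lowerCentralSeries (⊤ : Subgroup G) 1 := by
    intro x
    have h1 : φ (x ^ K) ∈ H.map φ := by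
      rw [map_pow, ← himg]
      exact hKmem (φ x)
    have h2 : x ^ K ∈ Subgroup.comap φ (H.map φ) := h1
    rw [Subgroup.comap_map_eq, hker] at h2
    rw [Subgroup.top_lowerCentralSeries_one]
    exact h2
  obtain ⟨m, hm1, hm⟩ := descent_full H K hK1 hpow
  exact finiteIndex_of_pow_mem H m hm1 hm

end PaperPoly
end
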